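/- (Theorem 1, k-cycle case, bounded gradients.) Let (z_t)_{t\ge 1} be an orbit of F, i.e. z_{t+1} = F(z_t). Suppose there exist k \ge 1 pairwise distinct points p_0, \dots, p_{k-1} \in \mathbb{R}^M with F(p_s) = p_{(s+1) \bmod k}, none of which has any zero component, such that for each residue s \in \{0,\dots,k-1\} the subsequence (z_{nk+s})_{n\ge 1} converges to one of the points p_0,\dots,p_{k-1}, and suppose \max_{0\le s\le k-1} \|W_\Omega(p_s)\|_2 < 1. Fix m, k' \in \{1,\dots,M\} and define (G_t)_{t\ge 1} by G_1 = 0 and G_{t+1} = \varphi(z_t)_{k'}\, e_m + W_\Omega(z_t)\, G_t, where e_m is the m-th standard basis vector (G_t equals \partial z_t/\partial W_{m k'}). Then \sup_t \|G_t\| < \infty. -/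

import Mathlib

open Matrix Filter Topology

/-- The operator 2-norm (largest singular value) of a real matrix. -/
noncomputable def opNorm2 {m n : Type*} [Fintype m] [Fintype n] [DecidableEq n]
    (A : Matrix m n ℝ) : ℝ :=
  ‖LinearMap.toContinuousLinearMap (Matrix.toEuclideanLin (𝕜 := ℝ) A)‖

/-- Euclidean norm of a real vector. -/
noncomputable def vnorm {n : Type*} [Fintype n] (v : n → ℝ) : ℝ :=
  Real.sqrt (∑ i, v i ^ 2)

/-- Componentwise ReLU. -/
noncomputable def relu {n : Type*} (z : n → ℝ) : n → ℝ := fun i => max 0 (z i)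

/-- `Dmat z` is the diagonal 0–1 matrix with `(Dmat z) i i = 1` iff `z i > 0`. -/
noncomputable def Dmat {n : Type*} [Fintype n] [DecidableEq n] (z : n → ℝ) :
    Matrix n n ℝ :=
  Matrix.diagonal (fun i => if 0 < z i then (1 : ℝ) else 0)

/-- `W_Ω(z) = A + W D(z)`. -/
noncomputable def Wom {n : Type*} [Fintype n] [DecidableEq n]
    (A W : Matrix n n ℝ) (z : n → ℝ) : Matrix n n ℝ :=
  A + W * Dmat z

/-- The deterministic, input-free PLRNN map `F(z) = A z + W φ(z) + h`. -/
noncomputable def plrnn {n : Type*} [Fintype n] [DecidableEq n]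
    (A W : Matrix n n ℝ) (h : n → ℝ) (z : n → ℝ) : n → ℝ :=
  A.mulVec z + W.mulVec (relu z) + h

lemma vnorm_eq {n : Type*} [Fintype n] (v : n → ℝ) :
    vnorm v = ‖((WithLp.equiv 2 (n → ℝ)).symm v : EuclideanSpace ℝ n)‖ := by
  rw [EuclideanSpace.norm_eq, vnorm]
  simp [Real.norm_eq_abs, sq_abs]

lemma vnorm_nonneg {n : Type*} [Fintype n] (v : n → ℝ) : 0 ≤ vnorm v :=
  Real.sqrt_nonneg _

lemma vnorm_add_le {n : Type*} [Fintype n] (v w : n → ℝ) :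
    vnorm (v + w) ≤ vnorm v + vnorm w := by
  simp only [vnorm_eq]
  rw [show (WithLp.equiv 2 (n → ℝ)).symm (v + w)
      = (WithLp.equiv 2 (n → ℝ)).symm v + (WithLp.equiv 2 (n → ℝ)).symm w from rfl]
  exact norm_add_le _ _

lemma vnorm_smul {n : Type*} [Fintype n] (c : ℝ) (v : n → ℝ) :
    vnorm (c • v) = |c| * vnorm v := by
  simp only [vnorm_eq]
  rw [show (WithLp.equiv 2 (n → ℝ)).symm (c • v)
      = c • (WithLp.equiv 2 (n → ℝ)).symm v from rfl]
  rw [norm_smul, Real.norm_eq_abs]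

lemma vnorm_single {n : Type*} [Fintype n] [DecidableEq n] (m : n) :
    vnorm (Pi.single m (1:ℝ)) = 1 := by
  rw [vnorm]
  have h1 : (∑ i, (Pi.single m (1:ℝ) : n → ℝ) i ^ 2) = 1 := by
    simp [Pi.single_apply, ite_pow]
  rw [h1, Real.sqrt_one]

lemma vnorm_mulVec_le {n : Type*} [Fintype n] [DecidableEq n]
    (A : Matrix n n ℝ) (v : n → ℝ) :
    vnorm (A.mulVec v) ≤ opNorm2 A * vnorm v := by
  simp only [vnorm_eq]
  show ‖(LinearMap.toContinuousLinearMap (Matrix.toEuclideanLin (𝕜 := ℝ) A)) ((WithLp.equiv 2 (n → ℝ)).symm v)‖ ≤ _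
  exact (LinearMap.toContinuousLinearMap (Matrix.toEuclideanLin (𝕜 := ℝ) A)).le_opNorm _

lemma opNorm2_nonneg {n : Type*} [Fintype n] [DecidableEq n] (A : Matrix n n ℝ) :
    0 ≤ opNorm2 A := norm_nonneg _

lemma pos_iff_of_close {a b : ℝ} (hb : b ≠ 0) (h : |a - b| < |b|) : (0 < a ↔ 0 < b) := by
  rcases abs_lt.mp h with ⟨h1, h2⟩
  rcases hb.lt_or_gt with hb | hb
  · rw [abs_of_neg hb] at h1 h2; constructor <;> intro <;> linarith
  · rw [abs_of_pos hb] at h1 h2; constructor <;> intro <;> linarith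

/-- Theorem 1, k-cycle case, bounded gradients: if the orbit `z` converges
(along each residue class mod `k`) to a stable `k`-cycle `p 0, …, p (k-1)` of pairwise
distinct points with no zero component, with `‖W_Ω(p s)‖₂ < 1` for every `s`, then the
derivative sequence `G` w.r.t. the weight `W m k'` (with `G 1 = 0` and
`G (t+1) = φ(z t)_{k'} e_m + W_Ω(z t) G t`) is bounded in norm. -/
theorem gradients_bounded_cycle {M : ℕ} (A W : Matrix (Fin M) (Fin M) ℝ)
    (hA : A.IsDiag) (hWd : ∀ i, W i i = 0) (h : Fin M → ℝ)
    (z : ℕ → Fin M → ℝ) (horb : ∀ t, 1 ≤ t → z (t + 1) = plrnn A W h (z t))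
    (k : ℕ) (hk : 0 < k) (p : Fin k → Fin M → ℝ) (hinj : Function.Injective p)
    (hcyc : ∀ s : Fin k, plrnn A W h (p s) = p ⟨((s : ℕ) + 1) % k, Nat.mod_lt _ hk⟩)
    (hnz : ∀ (s : Fin k) (i : Fin M), p s i ≠ 0)
    (hsub : ∀ s : Fin k, ∃ j : Fin k,
      Tendsto (fun n : ℕ => z (n * k + (s : ℕ))) atTop (𝓝 (p j)))
    (hnorm : ∀ s : Fin k, opNorm2 (Wom A W (p s)) < 1)
    (m k' : Fin M) (G : ℕ → Fin M → ℝ) (hG1 : G 1 = 0)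
    (hGrec : ∀ t, 1 ≤ t →
      G (t + 1) = relu (z t) k' • (Pi.single m 1 : Fin M → ℝ) + (Wom A W (z t)).mulVec (G t)) :
    ∃ C : ℝ, ∀ t, vnorm (G t) ≤ C := by
  classical
  haveI : NeZero k := ⟨hk.ne'⟩
  have hne : (Finset.univ : Finset (Fin k)).Nonempty := Finset.univ_nonempty
  set ρ := Finset.univ.sup' hne (fun s => opNorm2 (Wom A W (p s))) with hρdef
  have hρ1 : ρ < 1 := (Finset.sup'_lt_iff hne).mpr (fun s _ => hnorm s)
  have hρ0 : 0 ≤ ρ :=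
    le_trans (opNorm2_nonneg _) (Finset.le_sup' (fun s => opNorm2 (Wom A W (p s))) (Finset.mem_univ (⟨0, hk⟩ : Fin k)))
  set B := Finset.univ.sup' hne (fun j => |p j k'|) + 1 with hBdef
  have hBle : ∀ j : Fin k, |p j k'| + 1 ≤ B :=
    fun j => add_le_add_left (Finset.le_sup' (fun j => |p j k'|) (Finset.mem_univ j)) 1
  have hB0 : 0 ≤ B := le_trans (by positivity) (hBle ⟨0, hk⟩)
  choose j hj using hsub
  -- eventual good behaviour along each residue class
  have key : ∀ s : Fin k, ∃ N : ℕ, ∀ n ≥ N,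
      Wom A W (z (n * k + (s : ℕ))) = Wom A W (p (j s)) ∧
        relu (z (n * k + (s : ℕ))) k' ≤ B := by
    intro s
    have htend := hj s
    rw [tendsto_pi_nhds] at htend
    have hW : ∀ᶠ n in atTop, Dmat (z (n * k + (s : ℕ))) = Dmat (p (j s)) := by
      have hall : ∀ i : Fin M, ∀ᶠ n in atTop,
          (0 < z (n * k + (s : ℕ)) i ↔ 0 < p (j s) i) := by
        intro i
        have hpos : (0:ℝ) < |p (j s) i| := abs_pos.mpr (hnz (j s) i)
        have h2 := (htend i).eventually_mem (Metric.ball_mem_nhds _ hpos)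
        refine h2.mono fun n hn => ?_
        rw [Metric.mem_ball, Real.dist_eq] at hn
        exact pos_iff_of_close (hnz (j s) i) hn
      have := (Filter.eventually_all).mpr hall
      refine this.mono fun n hn => ?_
      unfold Dmat
      refine congrArg Matrix.diagonal (funext fun i => ?_)
      exact if_congr (hn i) rfl rfl
    have hb : ∀ᶠ n in atTop, relu (z (n * k + (s : ℕ))) k' ≤ B := by
      have h2 := (htend k').eventually_mem (Metric.ball_mem_nhds (p (j s) k') one_pos)
      refine h2.mono fun n hn => ?_
      rw [Metric.mem_ball, Real.dist_eq] at hn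
      have h3 : |z (n * k + (s : ℕ)) k'| ≤ |p (j s) k'| + 1 := by
        have := abs_sub_abs_le_abs_sub (z (n * k + (s : ℕ)) k') (p (j s) k')
        linarith
      have h4 : relu (z (n * k + (s : ℕ))) k' ≤ |z (n * k + (s : ℕ)) k'| :=
        max_le (abs_nonneg _) (le_abs_self _)
      exact le_trans h4 (le_trans h3 (hBle (j s)))
    have := hW.and hb
    rw [eventually_atTop] at this
    obtain ⟨N, hN⟩ := this
    exact ⟨N, fun n hn => ⟨by rw [Wom, Wom, (hN n hn).1], (hN n hn).2⟩⟩
  choose N hN using key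
  set N0 := Finset.univ.sup N with hN0def
  set T := (N0 + 1) * k with hTdef
  have hT1 : 1 ≤ T := le_trans hk (Nat.le_mul_of_pos_left k (Nat.succ_pos N0))
  have hgood : ∀ t, T ≤ t →
      opNorm2 (Wom A W (z t)) ≤ ρ ∧ relu (z t) k' ≤ B := by
    intro t ht
    have hs : t % k < k := Nat.mod_lt _ hk
    have h1 : N0 ≤ t / k := by
      rw [Nat.le_div_iff_mul_le hk]
      calc N0 * k ≤ (N0 + 1) * k := Nat.mul_le_mul_right k (Nat.le_succ N0)
        _ ≤ t := ht
    obtain ⟨hW, hb⟩ := hN ⟨t % k, hs⟩ (t / k)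
      (le_trans (Finset.le_sup (Finset.mem_univ _)) h1)
    have heq : t / k * k + (((⟨t % k, hs⟩ : Fin k)) : ℕ) = t := by
      show t / k * k + t % k = t
      exact Nat.div_add_mod' t k
    rw [heq] at hW hb
    refine ⟨?_, hb⟩
    rw [hW]
    exact Finset.le_sup' (fun s => opNorm2 (Wom A W (p s))) (Finset.mem_univ _)
  -- induction past time T
  have h1ρ : 0 < 1 - ρ := by linarith
  set K := vnorm (G T) + B / (1 - ρ) with hKdef
  have hBρ : 0 ≤ B / (1 - ρ) := div_nonneg hB0 h1ρ.le
  have hind : ∀ d, vnorm (G (T + d)) ≤ K := by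
    intro d
    induction d with
    | zero =>
      rw [Nat.add_zero, hKdef]
      exact le_add_of_nonneg_right hBρ
    | succ d ih =>
      have ht : 1 ≤ T + d := le_trans hT1 (Nat.le_add_right _ _)
      have hrec := hGrec (T + d) ht
      have hg := hgood (T + d) (Nat.le_add_right _ _)
      have step : vnorm (G (T + d + 1)) ≤ B + ρ * K := by
        rw [hrec]
        refine le_trans (vnorm_add_le _ _) ?_
        have e1 : vnorm (relu (z (T + d)) k' • (Pi.single m 1 : Fin M → ℝ))
            = |relu (z (T + d)) k'| := by rw [vnorm_smul, vnorm_single, mul_one]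
        have e2 : |relu (z (T + d)) k'| ≤ B := by
          rw [abs_of_nonneg (le_max_left _ _)]; exact hg.2
        have e3 := vnorm_mulVec_le (Wom A W (z (T + d))) (G (T + d))
        have e4 : opNorm2 (Wom A W (z (T + d))) * vnorm (G (T + d)) ≤ ρ * K :=
          mul_le_mul hg.1 ih (vnorm_nonneg _) hρ0
        rw [e1]
        linarith
      have hc : B / (1 - ρ) * (1 - ρ) = B := div_mul_cancel₀ B h1ρ.ne'
      have : B + ρ * K ≤ K := by
        have hGTnn := vnorm_nonneg (G T)
        rw [hKdef]
        nlinarith [mul_nonneg (le_of_lt h1ρ) hGTnn, hc]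
      exact le_trans step this
  -- finish
  have hne2 : (Finset.range (T + 1)).Nonempty := ⟨0, by simp⟩
  refine ⟨K ⊔ (Finset.range (T + 1)).sup' hne2 (fun t => vnorm (G t)), fun t => ?_⟩
  rcases le_or_gt t T with ht | ht
  · exact le_sup_of_le_right
      (Finset.le_sup' (fun t => vnorm (G t)) (Finset.mem_range.mpr (Nat.lt_succ_of_le ht)))
  · have heq : t = T + (t - T) := (Nat.add_sub_cancel' ht.le).symm
    rw [heq]
    exact le_sup_of_le_left (hind _)
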